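/- Let f : H → ℝ be convex, (ε_k)_{k≥1} a positive nonincreasing sequence converging to 0, and for each k let x̄_k be the unique minimizer over H of x ↦ f(x) + (ε_k/2)‖x‖². Then for all k ≥ 1: ((ε_k − ε_{k+1})/ε_{k+1}) ⟨x̄_k, x̄_{k+1} − x̄_k⟩ ≥ ‖x̄_{k+1} − x̄_k‖² and ((ε_k − ε_{k+1})/ε_k) ⟨x̄_{k+1}, x̄_{k+1} − x̄_k⟩ ≥ ‖x̄_{k+1} − x̄_k‖². Consequently, the sequence (‖x̄_k‖)_{k≥1} is nondecreasing and ⟨x̄_{k+1}, x̄_k⟩ ≥ 0 for all k ≥ 1. -/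

import Mathlib

open Filter Asymptotics Topology
open scoped RealInnerProductSpace

/-- Lemma A.1 (first part): basic inequalities for the Tikhonov approximation
curve, monotonicity of the norms and nonnegativity of consecutive inner products. -/
lemma growth_aux {E : Type*} [NormedAddCommGroup E] [InnerProductSpace ℝ E]
    (f : E → ℝ) (hconv : ConvexOn ℝ Set.univ f) (ε : ℝ) (hε : 0 < ε) (xb : E)
    (hmin : ∀ y, f xb + ε / 2 * ‖xb‖ ^ 2 ≤ f y + ε / 2 * ‖y‖ ^ 2) (y : E) :
    f xb + ε / 2 * ‖xb‖ ^ 2 + ε / 2 * ‖y - xb‖ ^ 2 ≤ f y + ε / 2 * ‖y‖ ^ 2 := by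
  have key : f xb ≤ f y + ε * ⟪xb, y - xb⟫ := by
    have hstep : ∀ t : ℝ, 0 < t → t ≤ 1 →
        f xb ≤ f y + ε * ⟪xb, y - xb⟫ + ε * t / 2 * ‖y - xb‖ ^ 2 := by
      intro t ht ht1
      have hz := hmin ((1 - t) • xb + t • y)
      have hc := hconv.2 (Set.mem_univ xb) (Set.mem_univ y)
        (by linarith : (0:ℝ) ≤ 1 - t) (le_of_lt ht) (by ring)
      have hnz : ‖(1 - t) • xb + t • y‖ ^ 2 =
          ‖xb‖ ^ 2 + 2 * t * ⟪xb, y - xb⟫ + t ^ 2 * ‖y - xb‖ ^ 2 := by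
        have h1 : ((1:ℝ) - t) • xb + t • y = xb + t • (y - xb) := by
          rw [smul_sub]; module
        rw [h1, norm_add_sq_real, norm_smul, real_inner_smul_right, mul_pow,
          Real.norm_eq_abs, sq_abs]
        ring
      rw [hnz] at hz
      simp only [smul_eq_mul] at hc
      have := le_trans hz (by linarith : f ((1-t) • xb + t • y) + ε/2 * (‖xb‖ ^ 2 + 2 * t * ⟪xb, y - xb⟫ + t ^ 2 * ‖y - xb‖ ^ 2) ≤ (1-t) * f xb + t * f y + ε/2 * (‖xb‖ ^ 2 + 2 * t * ⟪xb, y - xb⟫ + t ^ 2 * ‖y - xb‖ ^ 2))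
      nlinarith [this]
    by_contra h
    push_neg at h
    set c := ε / 2 * ‖y - xb‖ ^ 2 with hc
    have hc0 : 0 ≤ c := by positivity
    set δ := f xb - (f y + ε * ⟪xb, y - xb⟫) with hδ
    have hδ0 : 0 < δ := by simp [hδ]; linarith
    have ht := hstep (min 1 (δ / (2 * (c + 1)))) (by positivity) (min_le_left _ _)
    have h1 : ε * (min 1 (δ / (2 * (c + 1)))) / 2 * ‖y - xb‖ ^ 2
        = min 1 (δ / (2 * (c + 1))) * c := by rw [hc]; ring
    rw [h1] at ht
    have h2 : min 1 (δ / (2 * (c + 1))) * c ≤ δ / 2 := by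
      set m := min 1 (δ / (2 * (c + 1))) with hm
      have hm0 : 0 < m := by positivity
      have hcc : 0 < 2 * (c + 1) := by linarith
      have hm1 : m ≤ δ / (2 * (c + 1)) := min_le_right _ _
      have hm2 : m * (2 * (c + 1)) ≤ δ := (le_div_iff₀ hcc).mp hm1
      nlinarith [hm0.le, hc0]
    linarith [ht, h2, hδ0]
  have hexp : ‖y - xb‖ ^ 2 = ‖y‖ ^ 2 - 2 * ⟪xb, y⟫ + ‖xb‖ ^ 2 := by
    rw [norm_sub_sq_real, real_inner_comm xb y]
  have hin : ⟪xb, y - xb⟫ = ⟪xb, y⟫ - ‖xb‖ ^ 2 := by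
    rw [inner_sub_right, real_inner_self_eq_norm_sq]
  nlinarith [key]

theorem stmt17
{E : Type*} [NormedAddCommGroup E] [InnerProductSpace ℝ E]
    (f : E → ℝ) (hconv : ConvexOn ℝ Set.univ f) (hlsc : LowerSemicontinuous f)
    (ε : ℕ → ℝ) (hεpos : ∀ k, 1 ≤ k → 0 < ε k) (hεmono : ∀ k, 1 ≤ k → ε (k + 1) ≤ ε k)
    (hεlim : Tendsto ε atTop (𝓝 0))
    (xb : ℕ → E)
    (hxb : ∀ k, 1 ≤ k → ∀ y : E,
      f (xb k) + ε k / 2 * ‖xb k‖ ^ 2 ≤ f y + ε k / 2 * ‖y‖ ^ 2) :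
    (∀ k : ℕ, 1 ≤ k →
      (ε k - ε (k + 1)) / ε (k + 1) * ⟪xb k, xb (k + 1) - xb k⟫ ≥
        ‖xb (k + 1) - xb k‖ ^ 2) ∧
    (∀ k : ℕ, 1 ≤ k →
      (ε k - ε (k + 1)) / ε k * ⟪xb (k + 1), xb (k + 1) - xb k⟫ ≥
        ‖xb (k + 1) - xb k‖ ^ 2) ∧
    (∀ k : ℕ, 1 ≤ k → ‖xb k‖ ≤ ‖xb (k + 1)‖) ∧
    (∀ k : ℕ, 1 ≤ k → 0 ≤ ⟪xb (k + 1), xb k⟫) := by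
  have hk1 : ∀ k : ℕ, 1 ≤ k → 1 ≤ k + 1 := fun k hk => le_trans hk (Nat.le_succ k)
  -- key inequality K1
  have K1 : ∀ k : ℕ, 1 ≤ k →
      ε (k + 1) * ‖xb (k + 1) - xb k‖ ^ 2 ≤
        (ε k - ε (k + 1)) * ⟪xb k, xb (k + 1) - xb k⟫ := by
    intro k hk
    have I := growth_aux f hconv (ε k) (hεpos k hk) (xb k) (hxb k hk) (xb (k + 1))
    have II := growth_aux f hconv (ε (k + 1)) (hεpos (k + 1) (hk1 k hk)) (xb (k + 1))
      (hxb (k + 1) (hk1 k hk)) (xb k)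
    rw [norm_sub_rev] at II
    have hb : ‖xb (k + 1)‖ ^ 2 =
        ‖xb k‖ ^ 2 + 2 * ⟪xb k, xb (k + 1) - xb k⟫ + ‖xb (k + 1) - xb k‖ ^ 2 := by
      have h1 : xb (k + 1) = xb k + (xb (k + 1) - xb k) := by abel
      calc ‖xb (k + 1)‖ ^ 2 = ‖xb k + (xb (k + 1) - xb k)‖ ^ 2 := by rw [← h1]
        _ = _ := by rw [norm_add_sq_real]
    rw [hb] at I II
    nlinarith [I, II]
  have hbd : ∀ k : ℕ, ⟪xb (k + 1), xb (k + 1) - xb k⟫ =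
      ⟪xb k, xb (k + 1) - xb k⟫ + ‖xb (k + 1) - xb k‖ ^ 2 := by
    intro k
    have h1 : xb (k + 1) = xb k + (xb (k + 1) - xb k) := by abel
    calc ⟪xb (k + 1), xb (k + 1) - xb k⟫
        = ⟪xb k + (xb (k + 1) - xb k), xb (k + 1) - xb k⟫ := by rw [← h1]
      _ = _ := by rw [inner_add_left, real_inner_self_eq_norm_sq]
  have K2 : ∀ k : ℕ, 1 ≤ k →
      ε k * ‖xb (k + 1) - xb k‖ ^ 2 ≤
        (ε k - ε (k + 1)) * ⟪xb (k + 1), xb (k + 1) - xb k⟫ := by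
    intro k hk
    have h1 := K1 k hk
    have h2 : 0 ≤ (ε k - ε (k + 1)) * ‖xb (k + 1) - xb k‖ ^ 2 :=
      mul_nonneg (by linarith [hεmono k hk]) (sq_nonneg _)
    rw [hbd k]; nlinarith
  have had : ∀ k : ℕ, 1 ≤ k → 0 ≤ ⟪xb k, xb (k + 1) - xb k⟫ := by
    intro k hk
    have h1 := K1 k hk
    have hp := hεpos (k + 1) (hk1 k hk)
    rcases eq_or_lt_of_le (hεmono k hk) with h | h
    · have hd : ‖xb (k + 1) - xb k‖ ^ 2 ≤ 0 := by
        rw [← h] at h1; simp at h1; nlinarith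
      have hd0 : ‖xb (k + 1) - xb k‖ = 0 := by nlinarith [norm_nonneg (xb (k + 1) - xb k)]
      have : xb (k + 1) - xb k = 0 := norm_eq_zero.mp hd0
      simp [this]
    · nlinarith [sq_nonneg ‖xb (k + 1) - xb k‖]
  refine ⟨?_, ?_, ?_, ?_⟩
  · intro k hk
    have hp := hεpos (k + 1) (hk1 k hk)
    rw [ge_iff_le, div_mul_eq_mul_div, le_div_iff₀ hp]
    linarith [K1 k hk]
  · intro k hk
    have hp := hεpos k hk
    rw [ge_iff_le, div_mul_eq_mul_div, le_div_iff₀ hp]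
    linarith [K2 k hk]
  · intro k hk
    have hb : ‖xb (k + 1)‖ ^ 2 =
        ‖xb k‖ ^ 2 + 2 * ⟪xb k, xb (k + 1) - xb k⟫ + ‖xb (k + 1) - xb k‖ ^ 2 := by
      have h1 : xb (k + 1) = xb k + (xb (k + 1) - xb k) := by abel
      calc ‖xb (k + 1)‖ ^ 2 = ‖xb k + (xb (k + 1) - xb k)‖ ^ 2 := by rw [← h1]
        _ = _ := by rw [norm_add_sq_real]
    nlinarith [had k hk, sq_nonneg ‖xb (k + 1) - xb k‖, norm_nonneg (xb k),
      norm_nonneg (xb (k + 1))]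
  · intro k hk
    have h1 : ⟪xb (k + 1), xb k⟫ = ‖xb k‖ ^ 2 + ⟪xb k, xb (k + 1) - xb k⟫ := by
      have h2 : xb (k + 1) = xb k + (xb (k + 1) - xb k) := by abel
      calc ⟪xb (k + 1), xb k⟫ = ⟪xb k + (xb (k + 1) - xb k), xb k⟫ := by rw [← h2]
        _ = ‖xb k‖ ^ 2 + ⟪xb (k + 1) - xb k, xb k⟫ := by
          rw [inner_add_left, real_inner_self_eq_norm_sq]
        _ = _ := by rw [real_inner_comm]
    rw [h1]
    have := had k hk
    positivity
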